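/- The mixed second partial derivatives of p(x,y) computed from the Frobenius system agree: if one defines A(x,y) = (1/x)[2Q + 2(p + u)(p − u + 1) − 1/2 − v] and B(x,y) = −(1/y)[2p + u − 1/2], where u = (x³−s)/(24y), v = x³/(24y), and p, Q are the explicit functions from the previous context, then ∂A/∂y = ∂B/∂x on the domain x ≠ 0, y > 0. -/

import Mathlib

/-- The function `f(x) = ax² + bx⁴ − (x⁶ − s²)/576`. -/
noncomputable def fAux (a b s x : ℝ) : ℝ :=
  a * x ^ 2 + b * x ^ 4 - (x ^ 6 - s ^ 2) / 576

/-- `p(x,y) = f(x)/y² − (x³ − s)/(24y) + 1/4`. -/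
noncomputable def pAux (a b s x y : ℝ) : ℝ :=
  fAux a b s x / y ^ 2 - (x ^ 3 - s) / (24 * y) + 1 / 4

/-- `Q(x,y) = (1/y²)[x f'(x)/2 − f(x) + ((x³−s)/24)²] − x³/(24y) − p(x,y)²`. -/
noncomputable def QAux (a b s x y : ℝ) : ℝ :=
  (1 / y ^ 2) * (x * deriv (fAux a b s) x / 2 - fAux a b s x + ((x ^ 3 - s) / 24) ^ 2)
    - x ^ 3 / (24 * y) - (pAux a b s x y) ^ 2

/-- `u = (x³−s)/(24y)`, `v = x³/(24y)`;
`A(x,y) = (1/x)[2Q + 2(p + u)(p − u + 1) − 1/2 − v]`. -/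
noncomputable def AAux (a b s x y : ℝ) : ℝ :=
  (1 / x) * (2 * QAux a b s x y
    + 2 * (pAux a b s x y + (x ^ 3 - s) / (24 * y))
        * (pAux a b s x y - (x ^ 3 - s) / (24 * y) + 1)
    - 1 / 2 - x ^ 3 / (24 * y))

/-- `B(x,y) = −(1/y)[2p + u − 1/2]`. -/
noncomputable def BAux (a b s x y : ℝ) : ℝ :=
  -(1 / y) * (2 * pAux a b s x y + (x ^ 3 - s) / (24 * y) - 1 / 2)

lemma fAux_hasDerivAt (a b s t : ℝ) :
    HasDerivAt (fAux a b s) (2 * a * t + 4 * b * t ^ 3 - t ^ 5 / 96) t := by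
  have h : HasDerivAt (fAux a b s)
      (a * (2 * t ^ 1) + b * (4 * t ^ 3) - (6 * t ^ 5 - 0) / 576) t := by
    unfold fAux
    exact (((hasDerivAt_pow 2 t).const_mul a).add ((hasDerivAt_pow 4 t).const_mul b)).sub
      ((((hasDerivAt_pow 6 t).sub (hasDerivAt_const t (s ^ 2)))).div_const 576)
  convert h using 1
  ring

lemma fAux_deriv (a b s t : ℝ) :
    deriv (fAux a b s) t = 2 * a * t + 4 * b * t ^ 3 - t ^ 5 / 96 :=
  (fAux_hasDerivAt a b s t).deriv

/-- the mixed second partials of `p` computed from the Frobenius system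
agree: `∂A/∂y = ∂B/∂x` on the domain `x ≠ 0`, `y > 0`. -/
theorem stmt6 (a b s x y : ℝ) (hx : x ≠ 0) (hy : 0 < y) :
    deriv (fun y' => AAux a b s x y') y = deriv (fun x' => BAux a b s x' y) x := by
  have hy0 : y ≠ 0 := hy.ne'
  set C : ℝ := 2 * a * x + 4 * b * x ^ 3 - x ^ 5 / 96 with hC
  -- A(x, y') = C / y'² - x² / (8 y') near y
  have hev : (fun y' => AAux a b s x y') =ᶠ[nhds y]
      (fun y' => C / y' ^ 2 - x ^ 2 / (8 * y')) := by
    filter_upwards [eventually_ne_nhds hy0] with y' hy'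
    unfold AAux QAux
    rw [fAux_deriv]
    unfold pAux fAux
    field_simp
    ring
  have hlhs : deriv (fun y' => AAux a b s x y') y =
      -2 * C / y ^ 3 + x ^ 2 / (8 * y ^ 2) := by
    rw [hev.deriv_eq]
    have h1 : HasDerivAt (fun y' : ℝ => C / y' ^ 2)
        ((0 * y ^ 2 - C * (2 * y ^ 1)) / (y ^ 2) ^ 2) y :=
      (hasDerivAt_const y C).div (hasDerivAt_pow 2 y) (pow_ne_zero 2 hy0)
    have h2 : HasDerivAt (fun y' : ℝ => x ^ 2 / (8 * y'))
        ((0 * (8 * y) - x ^ 2 * (8 * 1)) / (8 * y) ^ 2) y :=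
      (hasDerivAt_const y (x ^ 2)).div ((hasDerivAt_id y).const_mul 8)
        (by positivity)
    have h3 : HasDerivAt (fun y' => C / y' ^ 2 - x ^ 2 / (8 * y'))
        ((0 * y ^ 2 - C * (2 * y ^ 1)) / (y ^ 2) ^ 2 - (0 * (8 * y) - x ^ 2 * (8 * 1)) / (8 * y) ^ 2) y :=
      h1.sub h2
    rw [h3.deriv]
    field_simp
    ring
  -- B(x', y) = -2 f(x') / y³ + (x'³ - s) / (24 y²) for all x'
  have hBeq : (fun x' => BAux a b s x' y) =
      (fun x' => -2 * fAux a b s x' / y ^ 3 + (x' ^ 3 - s) / (24 * y ^ 2)) := by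
    funext x'
    unfold BAux pAux
    field_simp
    ring
  have hrhs : deriv (fun x' => BAux a b s x' y) x =
      -2 * C / y ^ 3 + 3 * x ^ 2 / (24 * y ^ 2) := by
    rw [hBeq]
    have h1 : HasDerivAt (fun x' => -2 * fAux a b s x' / y ^ 3 + (x' ^ 3 - s) / (24 * y ^ 2))
        (-2 * C / y ^ 3 + 3 * x ^ 2 / (24 * y ^ 2)) x := by
      have ha : HasDerivAt (fun x' => -2 * fAux a b s x' / y ^ 3)
          (-2 * C / y ^ 3) x := (((fAux_hasDerivAt a b s x).const_mul (-2)).div_const (y ^ 3))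
      have hb : HasDerivAt (fun x' : ℝ => (x' ^ 3 - s) / (24 * y ^ 2))
          (3 * x ^ 2 / (24 * y ^ 2)) x := by
        have := ((hasDerivAt_pow 3 x).sub (hasDerivAt_const x s)).div_const (24 * y ^ 2)
        refine this.congr_deriv ?_
        push_cast; ring
      exact ha.add hb
    exact h1.deriv
  rw [hlhs, hrhs]
  field_simp
  ring
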